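/- Let X be a locally compact non-compact abelian group, let (G,H) be a compact stable Friedrichs X-module over the group X and (E,K) a stable Friedrichs X-module over the group X, with Gelfand triplets G ⊂ H ⊂ G* and E ⊂ K ⊂ E*, so that G, G*, E, E* carry induced Banach X-module structures over the group X. Assume D ∈ B(G,E) is of class C^u(Q;G,E), that a, b ∈ B(E,E*) are of class C^u(Q;E,E*), and that D*aD − z and D*bD − z are bijective maps from G onto G* for some z ∈ ℂ. If a − b ∈ B₀ˡ(E,E*) (with respect to the canonical multiplier algebra of E*), then (Δ_a − z)⁻¹ − (Δ_b − z)⁻¹ is a compact operator on H, where Δ_a and Δ_b are the operators induced in H by D*aD and D*bD; i.e. Δ_b is a compact perturbation of Δ_a. -/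

import Mathlib

open ContinuousLinearMap

noncomputable section

/-- The space of continuous antilinear forms on `G` (the "adjoint space" `G*`). -/
abbrev AntiDual (G : Type*) [NormedAddCommGroup G] [NormedSpace ℂ G] : Type _ :=
  G →SL[starRingEnd ℂ] ℂ

/-- Given a continuous embedding `e : G → H` of a normed space into a Hilbert space,
the canonical map `H → G*`, `v ↦ (u ↦ ⟪e u, v⟫)`. -/
def toAntiDual {G H : Type*} [NormedAddCommGroup G] [NormedSpace ℂ G]
    [NormedAddCommGroup H] [InnerProductSpace ℂ H] (e : G →L[ℂ] H) :
    H →L[ℂ] AntiDual G :=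
  LinearMap.mkContinuous
    { toFun := fun v => ((innerSL ℂ).flip v).comp e
      map_add' := fun v w => by ext u; simp
      map_smul' := fun c v => by ext u; simp }
    ‖e‖ (fun v => by
      have hv : ‖(innerSL ℂ).flip v‖ ≤ ‖v‖ :=
        opNorm_le_bound _ (norm_nonneg v)
          (fun u => by simpa [mul_comm] using norm_inner_le_norm (𝕜 := ℂ) u v)
      calc ‖((innerSL ℂ).flip v).comp e‖ ≤ ‖(innerSL ℂ).flip v‖ * ‖e‖ := opNorm_comp_le _ _
      _ ≤ ‖v‖ * ‖e‖ := by gcongr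
      _ = ‖e‖ * ‖v‖ := mul_comm _ _)

/-- Precomposition with `D : G →L E`, as a map `E* →L G*`; this is the adjoint `D*`. -/
def precompAntiDual {G E : Type*} [NormedAddCommGroup G] [NormedSpace ℂ G]
    [NormedAddCommGroup E] [NormedSpace ℂ E] (D : G →L[ℂ] E) :
    AntiDual E →L[ℂ] AntiDual G :=
  LinearMap.mkContinuous
    { toFun := fun w => w.comp D
      map_add' := fun w₁ w₂ => by ext u; simp
      map_smul' := fun c w => by ext u; simp }
    ‖D‖ (fun w => by
      calc ‖w.comp D‖ ≤ ‖w‖ * ‖D‖ := opNorm_comp_le _ _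
      _ = ‖D‖ * ‖w‖ := mul_comm _ _)

/-- Auxiliary: the antilinear form `u ↦ conj ⟨v, a u⟩`. -/
def adjointFormAux {E : Type*} [NormedAddCommGroup E] [NormedSpace ℂ E]
    (a : E →L[ℂ] AntiDual E) (v : E) : AntiDual E :=
  LinearMap.mkContinuous
    { toFun := fun u => starRingEnd ℂ (a u v)
      map_add' := fun u₁ u₂ => by simp
      map_smul' := fun c u => by simp }
    (‖a‖ * ‖v‖) (fun u => by
      simp only [LinearMap.coe_mk, AddHom.coe_mk]
      calc ‖starRingEnd ℂ (a u v)‖ = ‖a u v‖ := by simp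
      _ ≤ ‖a u‖ * ‖v‖ := (a u).le_opNorm v
      _ ≤ (‖a‖ * ‖u‖) * ‖v‖ := by gcongr; exact a.le_opNorm u
      _ = ‖a‖ * ‖v‖ * ‖u‖ := by ring)

theorem adjointFormAux_norm_le {E : Type*} [NormedAddCommGroup E] [NormedSpace ℂ E]
    (a : E →L[ℂ] AntiDual E) (v : E) : ‖adjointFormAux a v‖ ≤ ‖a‖ * ‖v‖ :=
  LinearMap.mkContinuous_norm_le _ (mul_nonneg (norm_nonneg a) (norm_nonneg v)) _

@[simp] theorem adjointFormAux_apply {E : Type*} [NormedAddCommGroup E] [NormedSpace ℂ E]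
    (a : E →L[ℂ] AntiDual E) (v u : E) :
    adjointFormAux a v u = starRingEnd ℂ (a u v) := rfl

/-- The adjoint form `a* ∈ B(E,E*)` of `a ∈ B(E,E*)`: `⟨u, a* v⟩ = conj ⟨v, a u⟩`. -/
def adjointForm {E : Type*} [NormedAddCommGroup E] [NormedSpace ℂ E]
    (a : E →L[ℂ] AntiDual E) : E →L[ℂ] AntiDual E :=
  LinearMap.mkContinuous
    { toFun := fun v => adjointFormAux a v
      map_add' := fun v w => by ext u; simp
      map_smul' := fun c v => by ext u; simp }
    ‖a‖ (fun v => adjointFormAux_norm_le a v)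

/-- A Banach `X`-module over the group `X`: a strongly continuous representation of the
dual group by bounded invertible operators. -/
structure GroupRep (Xd : Type*) [Monoid Xd] [TopologicalSpace Xd]
    (H : Type*) [NormedAddCommGroup H] [NormedSpace ℂ H] where
  V : Xd →* (H →L[ℂ] H)ˣ
  strong_cont : ∀ u : H, Continuous fun k : Xd => (↑(V k) : H →L[ℂ] H) u

/-- The regularity class `C^u(Q; H, K)`: norm continuity of `k ↦ V_k⁻¹ S V_k`. -/
def CuClass {Xd : Type*} [Monoid Xd] [TopologicalSpace Xd]
    {H K : Type*} [NormedAddCommGroup H] [NormedSpace ℂ H]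
    [NormedAddCommGroup K] [NormedSpace ℂ K]
    (WH : GroupRep Xd H) (WK : GroupRep Xd K) (S : H →L[ℂ] K) : Prop :=
  Continuous fun k : Xd =>
    (↑(WK.V k)⁻¹ : K →L[ℂ] K).comp (S.comp (↑(WH.V k) : H →L[ℂ] H))

/-- `B₀ˡ(H,K)`: the closed linear span of the operators `A ∘ T` with `A` in the multiplier
algebra of `K` and `T ∈ B(H,K)`. -/
def B0l {H K : Type*} [NormedAddCommGroup H] [NormedSpace ℂ H] [NormedAddCommGroup K]
    [NormedSpace ℂ K] (MK : Set (K →L[ℂ] K)) : Set (H →L[ℂ] K) :=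
  closure (↑(Submodule.span ℂ
    {S : H →L[ℂ] K | ∃ A ∈ MK, ∃ T : H →L[ℂ] K, S = A.comp T}) : Set (H →L[ℂ] K))

open MeasureTheory

/-- The canonical multiplier algebra of a Banach `X`-module over the group `X`: the norm
closure of the set of operators `ψ(V) = ∫ ψ(k) V_k dk`, `ψ ∈ L¹` with compact support. -/
def repMult {Xd : Type*} [Monoid Xd] [TopologicalSpace Xd] [MeasurableSpace Xd]
    {H : Type*} [NormedAddCommGroup H] [NormedSpace ℂ H] [CompleteSpace H]
    (W : GroupRep Xd H) (μ : Measure Xd) : Set (H →L[ℂ] H) :=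
  closure {A : H →L[ℂ] H | ∃ ψ : Xd → ℂ, Integrable ψ μ ∧ HasCompactSupport ψ ∧
    ∀ u : H, A u = ∫ k, ψ k • ((↑(W.V k) : H →L[ℂ] H) u) ∂μ}


/-! ### Auxiliary lemmas for the proof of Statement 9 -/

section Aux

open MeasureTheory Filter

theorem my_precomp_apply {G E : Type*} [NormedAddCommGroup G] [NormedSpace ℂ G]
    [NormedAddCommGroup E] [NormedSpace ℂ E] (D : G →L[ℂ] E) (w : AntiDual E) (u : G) :
    precompAntiDual D w u = w (D u) := rfl

theorem my_toAntiDual_apply {G H : Type*} [NormedAddCommGroup G] [NormedSpace ℂ G]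
    [NormedAddCommGroup H] [InnerProductSpace ℂ H] (e : G →L[ℂ] H)
    (v : H) (u : G) : toAntiDual e v u = inner ℂ (e u) v := rfl

theorem my_rep_cancel {Y H : Type*} [Group Y] [NormedAddCommGroup H] [NormedSpace ℂ H]
    (V : Y →* (H →L[ℂ] H)ˣ) (k : Y) (u : H) :
    (↑(V k) : H →L[ℂ] H) ((↑(V k⁻¹) : H →L[ℂ] H) u) = u := by
  have h : (V k) * (V k⁻¹) = 1 := by rw [← map_mul, mul_inv_cancel, map_one]
  have h2 : (↑((V k) * (V k⁻¹)) : H →L[ℂ] H) u = u := by rw [h]; rfl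
  rw [Units.val_mul, ContinuousLinearMap.mul_apply] at h2
  exact h2

theorem my_rep_cancel' {Y H : Type*} [Group Y] [NormedAddCommGroup H] [NormedSpace ℂ H]
    (V : Y →* (H →L[ℂ] H)ˣ) (k : Y) (u : H) :
    (↑(V k⁻¹) : H →L[ℂ] H) ((↑(V k) : H →L[ℂ] H) u) = u := by
  have := my_rep_cancel V k⁻¹ (u := u)
  rwa [inv_inv] at this

theorem my_precomp_sub {G E : Type*} [NormedAddCommGroup G] [NormedSpace ℂ G]
    [NormedAddCommGroup E] [NormedSpace ℂ E] (A B : G →L[ℂ] E) :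
    precompAntiDual (A - B) = precompAntiDual A - precompAntiDual B := by
  ext w u
  simp only [my_precomp_apply, ContinuousLinearMap.sub_apply, my_precomp_apply, map_sub]

theorem my_precomp_norm_le {G E : Type*} [NormedAddCommGroup G] [NormedSpace ℂ G]
    [NormedAddCommGroup E] [NormedSpace ℂ E] (A : G →L[ℂ] E) :
    ‖precompAntiDual A‖ ≤ ‖A‖ :=
  LinearMap.mkContinuous_norm_le _ (norm_nonneg _) _

theorem my_precomp_lipschitz {G E : Type*} [NormedAddCommGroup G] [NormedSpace ℂ G]
    [NormedAddCommGroup E] [NormedSpace ℂ E] :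
    LipschitzWith 1 (precompAntiDual : (G →L[ℂ] E) → (AntiDual E →L[ℂ] AntiDual G)) := by
  refine LipschitzWith.of_dist_le_mul fun A B => ?_
  rw [dist_eq_norm (precompAntiDual A) (precompAntiDual B), ← my_precomp_sub]
  simpa [dist_eq_norm] using my_precomp_norm_le (A - B)

theorem my_precomp_cancel {Y : Type*} [Group Y] {E : Type*} [NormedAddCommGroup E]
    [NormedSpace ℂ E] (V : Y →* (E →L[ℂ] E)ˣ) (k : Y) (w : AntiDual E) :
    precompAntiDual (↑(V k) : E →L[ℂ] E) (precompAntiDual (↑(V k⁻¹) : E →L[ℂ] E) w) = w := by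
  ext u
  simp only [my_precomp_apply]
  rw [my_rep_cancel' V k]

theorem my_precomp_cancel' {Y : Type*} [Group Y] {E : Type*} [NormedAddCommGroup E]
    [NormedSpace ℂ E] (V : Y →* (E →L[ℂ] E)ˣ) (k : Y) (w : AntiDual E) :
    precompAntiDual (↑(V k⁻¹) : E →L[ℂ] E) (precompAntiDual (↑(V k) : E →L[ℂ] E) w) = w := by
  have := my_precomp_cancel V k⁻¹ (w := w)
  rwa [inv_inv] at this

theorem my_cont_clm_comp {Y : Type*} [TopologicalSpace Y]
    {G E F : Type*} [NormedAddCommGroup G] [NormedSpace ℂ G]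
    [NormedAddCommGroup E] [NormedSpace ℂ E] [NormedAddCommGroup F] [NormedSpace ℂ F]
    {f : Y → E →L[ℂ] F} {g : Y → G →L[ℂ] E} (hf : Continuous f) (hg : Continuous g) :
    Continuous fun k => (f k).comp (g k) :=
  (isBoundedBilinearMap_comp (𝕜 := ℂ)).continuous.comp (hf.prodMk hg)

variable {Xd : Type*} [TopologicalSpace Xd] [MeasurableSpace Xd] [OpensMeasurableSpace Xd]
variable {H : Type*} [NormedAddCommGroup H] [NormedSpace ℂ H]

theorem my_integrable_smul_cont {μ : Measure Xd} {ψ : Xd → ℂ}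
    (hψ : Integrable ψ μ) (hcs : HasCompactSupport ψ) {g : Xd → H} (hg : Continuous g) :
    Integrable (fun k => ψ k • g k) μ := by
  set s := tsupport ψ with hs
  have hmeas : MeasurableSet s := (isClosed_tsupport ψ).measurableSet
  obtain ⟨M, hM⟩ : ∃ M, ∀ x ∈ s, ‖g x‖ ≤ M := hcs.exists_bound_of_continuousOn hg.continuousOn
  have heq : (fun k => ψ k • g k) = fun k => ψ k • s.indicator g k := by
    funext k
    by_cases hk : k ∈ s
    · rw [Set.indicator_of_mem hk]
    · rw [image_eq_zero_of_notMem_tsupport hk, zero_smul, zero_smul]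
  rw [heq]
  have haesm : AEStronglyMeasurable (fun k => ψ k • s.indicator g k) μ := by
    refine hψ.aestronglyMeasurable.smul ?_
    exact (aestronglyMeasurable_indicator_iff hmeas).2
      (hg.continuousOn.aestronglyMeasurable_of_isCompact hcs hmeas)
  refine Integrable.mono' (hψ.norm.mul_const M) haesm (ae_of_all _ fun k => ?_)
  by_cases hk : k ∈ s
  · rw [Set.indicator_of_mem hk, norm_smul]
    exact mul_le_mul_of_nonneg_left (hM k hk) (norm_nonneg _)
  · rw [Set.indicator_of_notMem hk, smul_zero, norm_zero]
    have : ψ k = 0 := image_eq_zero_of_notMem_tsupport hk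
    rw [this, norm_zero, zero_mul]

omit [MeasurableSpace Xd] [OpensMeasurableSpace Xd] in
theorem my_cont_W_apply {W : Xd → H →L[ℂ] H}
    (hWcont : ∀ u : H, Continuous fun k => W k u)
    (hWiso : ∀ (k : Xd) (u : H), ‖W k u‖ = ‖u‖) {v : Xd → H} (hv : Continuous v) :
    Continuous fun k => W k (v k) := by
  rw [continuous_iff_continuousAt]
  intro k₀
  have h2 : (fun k => W k (v k)) = fun k => W k (v k - v k₀) + W k (v k₀) := by
    funext k; rw [map_sub]; abel
  rw [h2]
  have h3 : Tendsto (fun k => W k (v k - v k₀)) (nhds k₀) (nhds 0) := by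
    refine squeeze_zero_norm (fun k => (hWiso k _).le) ?_
    have : Tendsto (fun k => ‖v k - v k₀‖) (nhds k₀) (nhds ‖v k₀ - v k₀‖) :=
      ((hv.sub continuous_const).norm).continuousAt
    simpa using this
  have h4 : ContinuousAt (fun k => W k (v k - v k₀)) k₀ := by
    unfold ContinuousAt
    simpa using h3
  exact h4.add (hWcont (v k₀)).continuousAt

omit [TopologicalSpace Xd] [MeasurableSpace Xd] [OpensMeasurableSpace Xd] in
theorem my_isCompactOperator_sum {ι P : Type*} [NormedAddCommGroup P] [NormedSpace ℂ P]
    (s : Finset ι) {f : ι → P → H} (h : ∀ i ∈ s, IsCompactOperator (f i)) :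
    IsCompactOperator (fun w => ∑ i ∈ s, f i w) := by
  classical
  induction s using Finset.induction_on with
  | empty => simp only [Finset.sum_empty]; exact isCompactOperator_zero
  | insert _ _ hni ih =>
    rename_i a t
    simp only [Finset.sum_insert hni]
    exact (h a (Finset.mem_insert_self a t)).add
      (ih fun i hi => h i (Finset.mem_insert_of_mem hi))

/-- The key compactness kernel lemma: an operator of the form
`w ↦ ∫ ψ(k) W_k (e (c_k w)) dk` with `c` norm-continuous is compact, provided all the
operators `ψ'(W) ∘ e` are compact. -/
theorem my_key_compact [CompleteSpace H]
    {G P : Type*} [NormedAddCommGroup G] [NormedSpace ℂ G]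
    [NormedAddCommGroup P] [NormedSpace ℂ P]
    {μ : Measure Xd} (W : Xd → H →L[ℂ] H)
    (hWcont : ∀ u : H, Continuous fun k => W k u)
    (hWiso : ∀ (k : Xd) (u : H), ‖W k u‖ = ‖u‖)
    (e : G →L[ℂ] H)
    (hA : ∀ A : H →L[ℂ] H, (∃ ψ' : Xd → ℂ, Integrable ψ' μ ∧ HasCompactSupport ψ' ∧
        ∀ u, A u = ∫ k, ψ' k • W k u ∂μ) → IsCompactOperator ⇑(A.comp e))
    {ψ : Xd → ℂ} (hψ : Integrable ψ μ) (hcs : HasCompactSupport ψ)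
    {c : Xd → P →L[ℂ] G} (hc : Continuous c)
    (F : P →L[ℂ] H) (hF : ∀ w, F w = ∫ k, ψ k • W k (e (c k w)) ∂μ) :
    IsCompactOperator ⇑F := by
  classical
  suffices h : ∀ δ : ℝ, 0 < δ → ∃ T : P →L[ℂ] H, IsCompactOperator ⇑T ∧ ‖F - T‖ ≤ δ by
    have hFmem : F ∈ closure {T : P →L[ℂ] H | IsCompactOperator ⇑T} := by
      rw [Metric.mem_closure_iff]
      intro δ hδ
      obtain ⟨T, hT, hle⟩ := h (δ / 2) (by positivity)
      exact ⟨T, hT, by rw [dist_eq_norm]; exact lt_of_le_of_lt hle (by linarith)⟩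
    rwa [IsClosed.closure_eq isClosed_setOf_isCompactOperator] at hFmem
  intro δ hδ
  set Cn : ℝ := ∫ k, ‖ψ k‖ ∂μ with hCn
  have hCn0 : 0 ≤ Cn := integral_nonneg fun k => norm_nonneg _
  set Cst : ℝ := Cn * ‖e‖ with hCst
  have hCst0 : 0 ≤ Cst := mul_nonneg hCn0 (norm_nonneg _)
  set ε : ℝ := δ / (Cst + 1) with hε
  have hεpos : 0 < ε := by positivity
  set S := tsupport ψ with hS
  set Bs : Xd → Set Xd := fun q => {k | ‖c k - c q‖ < ε} with hBs
  have hBopen : ∀ q, IsOpen (Bs q) := fun q =>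
    isOpen_lt ((hc.sub continuous_const).norm) continuous_const
  have hqmem : ∀ q, q ∈ Bs q := fun q => by simp [hBs, hεpos]
  obtain ⟨t, -, hcover⟩ := hcs.elim_nhds_subcover Bs (fun q _ => (hBopen q).mem_nhds (hqmem q))
  set l := t.toList with hl
  set n := l.length with hn
  set p : Fin n → Xd := l.get with hp
  have hcover' : ∀ k ∈ S, ∃ m : ℕ, ∃ hm : m < n, k ∈ Bs (p ⟨m, hm⟩) := by
    intro k hk
    obtain ⟨q, hqt, hq⟩ := Set.mem_iUnion₂.1 (hcover hk)
    obtain ⟨i, hi⟩ := List.mem_iff_get.1 (Finset.mem_toList.2 hqt)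
    exact ⟨i.1, i.2, by rw [show p ⟨i.1, i.2⟩ = q from hi]; exact hq⟩
  set Ks : Fin n → Set Xd := fun i =>
    (S ∩ Bs (p i)) \ (⋃ (j : Fin n) (_ : j < i), Bs (p j)) with hKs
  have hKmeas : ∀ i, MeasurableSet (Ks i) := fun i =>
    (((isClosed_tsupport ψ).measurableSet).inter (hBopen _).measurableSet).diff
      (MeasurableSet.iUnion fun j => MeasurableSet.iUnion fun _ => (hBopen _).measurableSet)
  have hKsub : ∀ i, Ks i ⊆ Bs (p i) := fun i k hk => hk.1.2
  have hKS : ∀ i, Ks i ⊆ S := fun i k hk => hk.1.1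
  have hfind : ∀ k ∈ S, ∃ i : Fin n, k ∈ Ks i ∧ ∀ j : Fin n, j ≠ i → k ∉ Ks j := by
    intro k hk
    have hex : ∃ m : ℕ, ∃ hm : m < n, k ∈ Bs (p ⟨m, hm⟩) := hcover' k hk
    obtain ⟨hm₀, hkB⟩ := Nat.find_spec hex
    refine ⟨⟨Nat.find hex, hm₀⟩, ⟨⟨hk, hkB⟩, ?_⟩, ?_⟩
    · intro hmem
      obtain ⟨j, hj⟩ := Set.mem_iUnion.1 hmem
      obtain ⟨hlt, hkj⟩ := Set.mem_iUnion.1 hj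
      exact Nat.find_min hex hlt ⟨j.2, hkj⟩
    · intro j hne hkj
      rcases lt_or_gt_of_ne hne with hlt | hgt
      · exact Nat.find_min hex hlt ⟨j.2, hkj.1.2⟩
      · exact hkj.2 (Set.mem_iUnion.2 ⟨⟨Nat.find hex, hm₀⟩, Set.mem_iUnion.2 ⟨hgt, hkB⟩⟩)
  set ψi : Fin n → Xd → ℂ := fun i => (Ks i).indicator ψ with hψi
  have hψiInt : ∀ i, Integrable (ψi i) μ := fun i => hψ.indicator (hKmeas i)
  have hψics : ∀ i, HasCompactSupport (ψi i) := fun i =>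
    hcs.mono (by rw [Set.support_indicator]; exact Set.inter_subset_right)
  have hInt0 : ∀ (u : H) (i : Fin n), Integrable (fun k => ψi i k • W k u) μ := fun u i =>
    my_integrable_smul_cont (hψiInt i) (hψics i) (hWcont u)
  set Aop : Fin n → H →L[ℂ] H := fun i =>
    LinearMap.mkContinuous
      { toFun := fun u => ∫ k, ψi i k • W k u ∂μ
        map_add' := fun u v => by
          simp only [map_add, smul_add]
          exact integral_add (hInt0 u i) (hInt0 v i)
        map_smul' := fun cc u => by
          simp only [RingHom.id_apply]
          rw [← integral_smul]
          congr 1; funext k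
          rw [_root_.map_smul, smul_comm] }
      (∫ k, ‖ψi i k‖ ∂μ)
      (fun u => by
        refine (norm_integral_le_of_norm_le ((hψiInt i).norm.mul_const ‖u‖)
          (ae_of_all _ fun k => ?_)).trans ?_
        · rw [norm_smul, hWiso]
        · rw [integral_mul_const]) with hAop
  have hAopApply : ∀ i u, Aop i u = ∫ k, ψi i k • W k u ∂μ := fun i u => rfl
  have hAopmem : ∀ i, IsCompactOperator ⇑((Aop i).comp e) := fun i =>
    hA _ ⟨ψi i, hψiInt i, hψics i, fun u => rfl⟩
  set T : P →L[ℂ] H := ∑ i, ((Aop i).comp e).comp (c (p i)) with hT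
  have hTcpt : IsCompactOperator ⇑T := by
    have hTc : ⇑T = fun w => ∑ i : Fin n, (((Aop i).comp e).comp (c (p i))) w := by
      funext w; exact ContinuousLinearMap.sum_apply _ _ _
    rw [hTc]
    refine my_isCompactOperator_sum Finset.univ fun i _ => ?_
    have : ⇑(((Aop i).comp e).comp (c (p i)))
        = ⇑((Aop i).comp e) ∘ ⇑(c (p i)) := rfl
    rw [this]
    exact (hAopmem i).comp_clm (c (p i))
  refine ⟨T, hTcpt, ?_⟩
  have hfin : Cst * ε ≤ δ := by
    rw [hε]
    calc Cst * (δ / (Cst + 1)) ≤ (Cst + 1) * (δ / (Cst + 1)) := by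
          have : 0 ≤ δ / (Cst + 1) := by positivity
          nlinarith
    _ = δ := by field_simp
  refine le_trans (opNorm_le_bound _ (mul_nonneg hCst0 hεpos.le) fun w => ?_) hfin
  have hgw : Continuous fun k => W k (e (c k w)) := by
    refine my_cont_W_apply hWcont hWiso ?_
    refine e.continuous.comp ?_
    have hap : Continuous fun A : P →L[ℂ] G => A w := by
      refine (LipschitzWith.of_dist_le_mul (K := ‖w‖₊) fun A B => ?_).continuous
      rw [dist_eq_norm, dist_eq_norm, ← ContinuousLinearMap.sub_apply]
      calc ‖(A - B) w‖ ≤ ‖A - B‖ * ‖w‖ := le_opNorm _ _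
      _ = ‖w‖₊ * ‖A - B‖ := mul_comm _ _
    exact hap.comp hc
  set f0 : Xd → H := fun k => ψ k • W k (e (c k w)) with hf0
  have I0 : Integrable f0 μ := my_integrable_smul_cont hψ hcs hgw
  set hvec : Fin n → Xd → H := fun i k => ψi i k • W k (e (c (p i) w)) with hhvec
  have Ii : ∀ i, Integrable (hvec i) μ := fun i =>
    my_integrable_smul_cont (hψiInt i) (hψics i) (hWcont _)
  have hterm : ∀ i, (((Aop i).comp e).comp (c (p i))) w = ∫ k, hvec i k ∂μ := fun i => rfl
  have hTw : T w = ∫ k, (∑ i, hvec i k) ∂μ := by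
    rw [hT, ContinuousLinearMap.sum_apply]
    rw [integral_finset_sum _ (fun i _ => Ii i)]
    exact Finset.sum_congr rfl fun i _ => hterm i
  have hkey : (F - T) w = ∫ k, (f0 k - ∑ i, hvec i k) ∂μ := by
    rw [ContinuousLinearMap.sub_apply, hF w, hTw,
      ← integral_sub I0 (integrable_finset_sum _ (fun i _ => Ii i))]
  rw [hkey]
  refine (norm_integral_le_of_norm_le (hψ.norm.mul_const (‖e‖ * ε * ‖w‖))
    (ae_of_all _ fun k => ?_)).trans ?_
  · by_cases hk : k ∈ S
    · obtain ⟨i₀, hi₀, huniq⟩ := hfind k hk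
      have hsum : ∑ i, hvec i k = ψ k • W k (e (c (p i₀) w)) := by
        rw [Finset.sum_eq_single i₀]
        · simp only [hhvec, hψi]
          rw [Set.indicator_of_mem hi₀]
        · intro j _ hj
          simp only [hhvec, hψi]
          rw [Set.indicator_of_notMem (huniq j hj), zero_smul]
        · intro hcon
          exact absurd (Finset.mem_univ i₀) hcon
      rw [hsum]
      have hBmem : ‖c k - c (p i₀)‖ < ε := hKsub i₀ hi₀
      calc ‖f0 k - ψ k • W k (e (c (p i₀) w))‖
          = ‖ψ k • (W k (e (c k w)) - W k (e (c (p i₀) w)))‖ := by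
            simp only [hf0]; rw [smul_sub]
        _ = ‖ψ k‖ * ‖W k (e (c k w)) - W k (e (c (p i₀) w))‖ := by rw [norm_smul]
        _ = ‖ψ k‖ * ‖W k (e (c k w) - e (c (p i₀) w))‖ := by rw [(W k).map_sub]
        _ = ‖ψ k‖ * ‖e (c k w) - e (c (p i₀) w)‖ := by rw [hWiso]
        _ = ‖ψ k‖ * ‖e ((c k - c (p i₀)) w)‖ := by
            rw [← e.map_sub, ContinuousLinearMap.sub_apply]
        _ ≤ ‖ψ k‖ * (‖e‖ * ‖(c k - c (p i₀)) w‖) := by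
            gcongr; exact e.le_opNorm _
        _ ≤ ‖ψ k‖ * (‖e‖ * (‖c k - c (p i₀)‖ * ‖w‖)) := by
            gcongr; exact (c k - c (p i₀)).le_opNorm _
        _ ≤ ‖ψ k‖ * (‖e‖ * (ε * ‖w‖)) := by gcongr
        _ = ‖ψ k‖ * (‖e‖ * ε * ‖w‖) := by ring
    · have hψ0 : ψ k = 0 := image_eq_zero_of_notMem_tsupport hk
      have hψi0 : ∀ i, ψi i k = (0 : ℂ) :=
        fun i => Set.indicator_of_notMem (fun hmm => hk (hKS i hmm)) ψ
      simp only [hf0, hhvec, hψ0, hψi0, zero_smul, Finset.sum_const_zero, sub_zero,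
        norm_zero]
      positivity
  · rw [integral_mul_const, ← hCn]
    refine le_of_eq ?_
    rw [hCst]; ring

end Aux

set_option maxHeartbeats 2000000 in
set_option synthInstance.maxHeartbeats 1000000 in
/-- Stability of the essential spectrum for operators in divergence form
over stable Friedrichs `X`-modules over a locally compact non-compact abelian group:
if `D`, `a`, `b` are of class `C^u(Q)`, `D*aD − z` and `D*bD − z` are bijective
`G → G*`, and `a − b ∈ B₀ˡ(E, E*)`, then the resolvent difference
`(Δ_a − z)⁻¹ − (Δ_b − z)⁻¹` is compact. -/
theorem stmt9 {X : Type*} [TopologicalSpace X] [CommGroup X] [IsTopologicalGroup X]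
    [LocallyCompactSpace X] [T2Space X] [NoncompactSpace X]
    [MeasurableSpace (PontryaginDual X)] [BorelSpace (PontryaginDual X)]
    (μ : Measure (PontryaginDual X)) [μ.IsHaarMeasure]
    {G H E K : Type*}
    [NormedAddCommGroup G] [InnerProductSpace ℂ G] [CompleteSpace G]
    [NormedAddCommGroup H] [InnerProductSpace ℂ H] [CompleteSpace H]
    [NormedAddCommGroup E] [InnerProductSpace ℂ E] [CompleteSpace E]
    [NormedAddCommGroup K] [InnerProductSpace ℂ K] [CompleteSpace K]
    -- `H` and `K` are Hilbert `X`-modules over the group `X` (unitary representations):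
    (WH : GroupRep (PontryaginDual X) H) (WK : GroupRep (PontryaginDual X) K)
    (hWHuni : ∀ (k : PontryaginDual X) (u : H), ‖(↑(WH.V k) : H →L[ℂ] H) u‖ = ‖u‖)
    (hWKuni : ∀ (k : PontryaginDual X) (w : K), ‖(↑(WK.V k) : K →L[ℂ] K) w‖ = ‖w‖)
    -- `(G, H)` is a stable Friedrichs `X`-module (`V_k G ⊆ G`, with induced representation
    -- `VG`), which is compact:
    (e : G →L[ℂ] H) (he : Function.Injective ⇑e) (hd : DenseRange ⇑e)
    (VG : GroupRep (PontryaginDual X) G)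
    (hVG : ∀ (k : PontryaginDual X) (u : G),
      e ((↑(VG.V k) : G →L[ℂ] G) u) = (↑(WH.V k) : H →L[ℂ] H) (e u))
    (hcpt : ∀ A ∈ repMult WH μ, IsCompactOperator (⇑(A.comp e)))
    -- `(E, K)` is a stable Friedrichs `X`-module:
    (eE : E →L[ℂ] K) (heE : Function.Injective ⇑eE) (hdE : DenseRange ⇑eE)
    (VE : GroupRep (PontryaginDual X) E)
    (hVE : ∀ (k : PontryaginDual X) (u : E),
      eE ((↑(VE.V k) : E →L[ℂ] E) u) = (↑(WK.V k) : K →L[ℂ] K) (eE u))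
    -- `D ∈ B(G, E)` and `a, b ∈ B(E, E*)` are of class `C^u(Q)`:
    (D : G →L[ℂ] E) (hD : CuClass VG VE D)
    (a b : E →L[ℂ] AntiDual E)
    (ha : Continuous fun k : PontryaginDual X =>
      (precompAntiDual (↑(VE.V k) : E →L[ℂ] E)).comp (a.comp (↑(VE.V k) : E →L[ℂ] E)))
    (hb : Continuous fun k : PontryaginDual X =>
      (precompAntiDual (↑(VE.V k) : E →L[ℂ] E)).comp (b.comp (↑(VE.V k) : E →L[ℂ] E)))
    -- `D*aD − z` and `D*bD − z` are bijective maps `G → G*`: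
    (z : ℂ)
    (hbija : Function.Bijective
      ⇑((precompAntiDual D).comp (a.comp D) - z • (toAntiDual e).comp e))
    (hbijb : Function.Bijective
      ⇑((precompAntiDual D).comp (b.comp D) - z • (toAntiDual e).comp e))
    -- `a − b ∈ B₀ˡ(E, E*)` for the canonical multiplier algebra of `E*` (built from the
    -- representation `k ↦ (V_{k⁻¹})*` of the dual group on `E*`):
    (hab : a - b ∈ B0l (H := E)
      (closure {A : AntiDual E →L[ℂ] AntiDual E | ∃ ψ : PontryaginDual X → ℂ,
        Integrable ψ μ ∧ HasCompactSupport ψ ∧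
        ∀ w : AntiDual E, A w =
          ∫ k, ψ k • (precompAntiDual (↑(VE.V k⁻¹) : E →L[ℂ] E) w) ∂μ}))
    -- the resolvents `(Δ_a − z)⁻¹` and `(Δ_b − z)⁻¹`:
    (Ra Rb : H →L[ℂ] H)
    (hRa : ∀ v : H, ∃ u : G, e u = Ra v ∧
      ((precompAntiDual D).comp (a.comp D)) u - z • ((toAntiDual e).comp e) u
        = toAntiDual e v)
    (hRb : ∀ v : H, ∃ u : G, e u = Rb v ∧
      ((precompAntiDual D).comp (b.comp D)) u - z • ((toAntiDual e).comp e) u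
        = toAntiDual e v) :
    IsCompactOperator (⇑(Ra - Rb)) := by
  classical
  -- Abbreviations
  set J : G →L[ℂ] AntiDual G := (toAntiDual e).comp e with hJ
  set Sa : G →L[ℂ] AntiDual G := (precompAntiDual D).comp (a.comp D) - z • J with hSa
  set Sb : G →L[ℂ] AntiDual G := (precompAntiDual D).comp (b.comp D) - z • J with hSb
  -- Inverses of bijective operators (open mapping theorem)
  have hker : ∀ S : G →L[ℂ] AntiDual G, Function.Bijective ⇑S →
      ∃ Tinv : AntiDual G →L[ℂ] G, (∀ u, Tinv (S u) = u) ∧ (∀ w, S (Tinv w) = w) := by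
    intro S hS
    have h1 : S.ker = ⊥ := LinearMap.ker_eq_bot.mpr hS.injective
    have h2 : S.range = ⊤ := LinearMap.range_eq_top.mpr hS.surjective
    let Es := ContinuousLinearEquiv.ofBijective S h1 h2
    have hEs : ∀ u, Es u = S u := fun u =>
      congrFun (ContinuousLinearEquiv.coeFn_ofBijective S h1 h2) u
    refine ⟨(Es.symm : AntiDual G →L[ℂ] G), fun u => ?_, fun w => ?_⟩
    · calc (Es.symm : AntiDual G →L[ℂ] G) (S u) = Es.symm (S u) := rfl
      _ = Es.symm (Es u) := by rw [hEs]
      _ = u := Es.symm_apply_apply u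
    · calc S ((Es.symm : AntiDual G →L[ℂ] G) w) = Es (Es.symm w) := (hEs (Es.symm w)).symm
      _ = w := Es.apply_symm_apply w
  obtain ⟨Ta, hTaSa, hSaTa⟩ := hker Sa hbija
  obtain ⟨Tb, hTbSb, hSbTb⟩ := hker Sb hbijb
  -- The factors of the resolvent difference
  set L : AntiDual E →L[ℂ] H := (e.comp Tb).comp (precompAntiDual D) with hL
  set R : H →L[ℂ] E := (D.comp Ta).comp (toAntiDual e) with hR
  set Φ : (E →L[ℂ] AntiDual E) → (H →L[ℂ] H) := fun c => L.comp (c.comp R) with hΦ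
  -- Resolvent formulas
  have hRav : ∀ v, Ra v = e (Ta (toAntiDual e v)) := by
    intro v
    obtain ⟨u, hu1, hu2⟩ := hRa v
    have hSau : Sa u = toAntiDual e v := by
      rw [hSa, ContinuousLinearMap.sub_apply, ContinuousLinearMap.smul_apply]
      exact hu2
    have hu : u = Ta (toAntiDual e v) := by rw [← hSau, hTaSa]
    rw [← hu1, hu]
  have hRbv : ∀ v, Rb v = e (Tb (toAntiDual e v)) := by
    intro v
    obtain ⟨u, hu1, hu2⟩ := hRb v
    have hSbu : Sb u = toAntiDual e v := by
      rw [hSb, ContinuousLinearMap.sub_apply, ContinuousLinearMap.smul_apply]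
      exact hu2
    have hu : u = Tb (toAntiDual e v) := by rw [← hSbu, hTbSb]
    rw [← hu1, hu]
  -- The resolvent identity
  have hkeyid : Rb - Ra = Φ (a - b) := by
    ext v
    rw [ContinuousLinearMap.sub_apply, hRav v, hRbv v]
    have hΦv : Φ (a - b) v
        = e (Tb (precompAntiDual D ((a - b) (D (Ta (toAntiDual e v)))))) := rfl
    rw [hΦv]
    set u1 := Ta (toAntiDual e v) with hu1
    set u2 := Tb (toAntiDual e v) with hu2
    have e1 : Sb u2 = toAntiDual e v := by rw [hu2]; exact hSbTb _
    have e2 : Sa u1 = toAntiDual e v := by rw [hu1]; exact hSaTa _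
    have hdiff : Sb (u2 - u1) = precompAntiDual D ((a - b) (D u1)) := by
      rw [map_sub, e1, ← e2, hSa, hSb]
      simp only [ContinuousLinearMap.sub_apply, ContinuousLinearMap.comp_apply,
        ContinuousLinearMap.smul_apply, map_sub]
      abel
    have hu12 : u2 - u1 = Tb (precompAntiDual D ((a - b) (D u1))) := by
      rw [← hdiff, hTbSb]
    rw [← e.map_sub, hu12]
  -- Unitarity of W_H preserves inner products
  have hIso : ∀ (k : PontryaginDual X) (x y : H),
      (inner ℂ ((↑(WH.V k) : H →L[ℂ] H) x) ((↑(WH.V k) : H →L[ℂ] H) y) : ℂ) = inner ℂ x y :=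
    fun k x y => LinearIsometry.inner_map_map
      ⟨(↑(WH.V k) : H →L[ℂ] H).toLinearMap, hWHuni k⟩ x y
  -- Families of conjugated operators
  set DkF : PontryaginDual X → (G →L[ℂ] E) := fun k =>
    (↑(VE.V k⁻¹) : E →L[ℂ] E).comp (D.comp (↑(VG.V k) : G →L[ℂ] G)) with hDkF
  set bkF : PontryaginDual X → (E →L[ℂ] AntiDual E) := fun k =>
    (precompAntiDual (↑(VE.V k) : E →L[ℂ] E)).comp (b.comp (↑(VE.V k) : E →L[ℂ] E)) with hbkF
  set S2F : PontryaginDual X → (G →L[ℂ] AntiDual G) := fun k =>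
    (precompAntiDual (↑(VG.V k) : G →L[ℂ] G)).comp (Sb.comp (↑(VG.V k) : G →L[ℂ] G)) with hS2F
  set T2F : PontryaginDual X → (AntiDual G →L[ℂ] G) := fun k =>
    (↑(VG.V k⁻¹) : G →L[ℂ] G).comp
      (Tb.comp (precompAntiDual (↑(VG.V k⁻¹) : G →L[ℂ] G))) with hT2F
  have hDkcont : Continuous DkF := by
    rw [hDkF]
    have heq : (fun k : PontryaginDual X =>
        (↑(VE.V k⁻¹) : E →L[ℂ] E).comp (D.comp (↑(VG.V k) : G →L[ℂ] G)))
        = fun k => (↑(VE.V k)⁻¹ : E →L[ℂ] E).comp (D.comp (↑(VG.V k) : G →L[ℂ] G)) := by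
      funext k; rw [map_inv]
    rw [heq]
    exact hD
  have hbkcont : Continuous bkF := by rw [hbkF]; exact hb
  -- Factorization of the conjugated `S_b`
  have hS2fact : S2F = fun k =>
      (precompAntiDual (DkF k)).comp ((bkF k).comp (DkF k)) - z • J := by
    funext k
    ext u u'
    simp only [hS2F, hDkF, hbkF, hSb, hJ, ContinuousLinearMap.comp_apply,
      ContinuousLinearMap.sub_apply, ContinuousLinearMap.smul_apply, my_precomp_apply,
      smul_eq_mul, my_toAntiDual_apply]
    rw [my_rep_cancel VE.V k, my_rep_cancel VE.V k, hVG, hVG, hIso]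
  have hS2cont : Continuous S2F := by
    rw [hS2fact]
    have hsubmap : LipschitzWith 1 (fun Y : G →L[ℂ] AntiDual G => Y - z • J) := by
      refine LipschitzWith.of_dist_le_mul fun Y Y' => ?_
      rw [dist_eq_norm (Y - z • J) (Y' - z • J), dist_eq_norm Y Y', NNReal.coe_one, one_mul]
      have habel : Y - z • J - (Y' - z • J) = Y - Y' := by abel
      rw [habel]
    exact hsubmap.continuous.comp
      (my_cont_clm_comp (my_precomp_lipschitz.continuous.comp hDkcont)
        (my_cont_clm_comp hbkcont hDkcont))
  -- `T2F` inverts `S2F`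
  have hST : ∀ k w, S2F k (T2F k w) = w := by
    intro k w
    simp only [hS2F, hT2F, ContinuousLinearMap.comp_apply]
    rw [my_rep_cancel VG.V k, hSbTb, my_precomp_cancel VG.V k]
  have hTS : ∀ k u, T2F k (S2F k u) = u := by
    intro k u
    simp only [hS2F, hT2F, ContinuousLinearMap.comp_apply]
    rw [my_precomp_cancel' VG.V k, hTbSb, my_rep_cancel' VG.V k]
  -- continuity of `T2F` via continuity of `Ring.inverse`
  have hT2cont : Continuous T2F := by
    rw [continuous_iff_continuousAt]
    intro k₀
    have hMcont : Continuous fun k => (T2F k₀).comp (S2F k) :=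
      my_cont_clm_comp continuous_const hS2cont
    have hMunit1 : ∀ k, ((T2F k₀).comp (S2F k)) * ((T2F k).comp (S2F k₀)) = 1 := by
      intro k; ext u
      simp only [ContinuousLinearMap.mul_apply, ContinuousLinearMap.comp_apply,
        ContinuousLinearMap.one_apply]
      rw [hST k, hTS k₀]
    have hMunit2 : ∀ k, ((T2F k).comp (S2F k₀)) * ((T2F k₀).comp (S2F k)) = 1 := by
      intro k; ext u
      simp only [ContinuousLinearMap.mul_apply, ContinuousLinearMap.comp_apply,
        ContinuousLinearMap.one_apply]
      rw [hST k₀, hTS k]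
    have hT2eq : T2F = fun k =>
        (Ring.inverse ((T2F k₀).comp (S2F k))).comp (T2F k₀) := by
      funext k
      have hu : Ring.inverse ((T2F k₀).comp (S2F k)) = (T2F k).comp (S2F k₀) :=
        Ring.inverse_unit ⟨(T2F k₀).comp (S2F k), (T2F k).comp (S2F k₀),
          hMunit1 k, hMunit2 k⟩
      rw [hu]
      ext w
      simp only [ContinuousLinearMap.comp_apply]
      rw [hST k₀]
    rw [hT2eq]
    have hpt : ContinuousAt (Ring.inverse : (G →L[ℂ] G) → (G →L[ℂ] G))
        ((T2F k₀).comp (S2F k₀)) :=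
      NormedRing.inverse_continuousAt
        (⟨(T2F k₀).comp (S2F k₀), (T2F k₀).comp (S2F k₀),
          hMunit1 k₀, hMunit2 k₀⟩ : (G →L[ℂ] G)ˣ)
    have h1 : ContinuousAt (fun k => Ring.inverse ((T2F k₀).comp (S2F k))) k₀ :=
      ContinuousAt.comp (g := Ring.inverse) hpt hMcont.continuousAt
    have h2 : Continuous fun B : G →L[ℂ] G => B.comp (T2F k₀) :=
      my_cont_clm_comp continuous_id continuous_const
    exact ContinuousAt.comp h2.continuousAt h1
  -- The continuous family `C_k`
  set CF : PontryaginDual X → (AntiDual E →L[ℂ] G) := fun k =>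
    (↑(VG.V k⁻¹) : G →L[ℂ] G).comp ((Tb.comp (precompAntiDual D)).comp
      (precompAntiDual (↑(VE.V k⁻¹) : E →L[ℂ] E))) with hCF
  have hCfact : CF = fun k => (T2F k).comp (precompAntiDual (DkF k)) := by
    funext k
    ext w
    simp only [hCF, hT2F, hDkF, ContinuousLinearMap.comp_apply]
    congr 2
    ext u
    simp only [my_precomp_apply, ContinuousLinearMap.comp_apply]
    rw [my_rep_cancel VG.V k]
  have hCcont : Continuous CF := by
    rw [hCfact]
    exact my_cont_clm_comp hT2cont (my_precomp_lipschitz.continuous.comp hDkcont)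
  -- pointwise identity `L ∘ (V_{k⁻¹})* = W_k ∘ e ∘ C_k`
  have hLP : ∀ (k : PontryaginDual X) (w : AntiDual E),
      L (precompAntiDual (↑(VE.V k⁻¹) : E →L[ℂ] E) w)
        = (↑(WH.V k) : H →L[ℂ] H) (e (CF k w)) := by
    intro k w
    simp only [hL, hCF, ContinuousLinearMap.comp_apply]
    rw [hVG k⁻¹, my_rep_cancel WH.V k]
  -- Main compactness lemma: `L ∘ A` is compact for `A` in the multiplier algebra of `E*`
  have hLA0 : ∀ A ∈ {A : AntiDual E →L[ℂ] AntiDual E | ∃ ψ : PontryaginDual X → ℂ,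
      Integrable ψ μ ∧ HasCompactSupport ψ ∧ ∀ w : AntiDual E, A w =
        ∫ k, ψ k • (precompAntiDual (↑(VE.V k⁻¹) : E →L[ℂ] E) w) ∂μ},
      IsCompactOperator ⇑(L.comp A) := by
    rintro A ⟨ψ, hψI, hψcs, hAform⟩
    by_cases hgood : ∀ w : AntiDual E, Integrable (fun k => ψ k •
        (precompAntiDual (↑(VE.V k⁻¹) : E →L[ℂ] E) w)) μ
    · refine my_key_compact (μ := μ) (fun k => (↑(WH.V k) : H →L[ℂ] H))
        WH.strong_cont hWHuni e ?_ hψI hψcs hCcont (L.comp A) ?_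
      · intro A' hex
        exact hcpt A' (subset_closure hex)
      · intro w
        rw [ContinuousLinearMap.comp_apply, hAform w,
          ← ContinuousLinearMap.integral_comp_comm L (hgood w)]
        congr 1
        funext k
        rw [L.map_smul, hLP k w]
    · push_neg at hgood
      obtain ⟨w₀, hw₀⟩ := hgood
      have hAzero : ∀ w, A w = 0 := by
        intro w
        by_cases hw : Integrable (fun k => ψ k •
            (precompAntiDual (↑(VE.V k⁻¹) : E →L[ℂ] E) w)) μ
        · have hww : ¬ Integrable (fun k => ψ k •
              (precompAntiDual (↑(VE.V k⁻¹) : E →L[ℂ] E) (w + w₀))) μ := by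
            intro hcon
            refine hw₀ ?_
            have heq : (fun k => ψ k • (precompAntiDual (↑(VE.V k⁻¹) : E →L[ℂ] E) w₀))
                = (fun k => ψ k • (precompAntiDual (↑(VE.V k⁻¹) : E →L[ℂ] E) (w + w₀)))
                  - (fun k => ψ k • (precompAntiDual (↑(VE.V k⁻¹) : E →L[ℂ] E) w)) := by
              funext k
              simp only [Pi.sub_apply]
              rw [(precompAntiDual (↑(VE.V k⁻¹) : E →L[ℂ] E)).map_add, smul_add]
              abel
            rw [heq]
            exact hcon.sub hw
          have h1 : A (w + w₀) = 0 := by rw [hAform]; exact integral_undef hww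
          have h2 : A w₀ = 0 := by rw [hAform]; exact integral_undef hw₀
          have h3 := A.map_add w w₀
          rw [h1, h2, add_zero] at h3
          exact h3.symm
        · rw [hAform]; exact integral_undef hw
      have hzero : L.comp A = 0 := by
        ext w
        simp [hAzero w]
      rw [hzero]
      exact isCompactOperator_zero
  have hLA : ∀ A ∈ closure {A : AntiDual E →L[ℂ] AntiDual E | ∃ ψ : PontryaginDual X → ℂ,
      Integrable ψ μ ∧ HasCompactSupport ψ ∧ ∀ w : AntiDual E, A w =
        ∫ k, ψ k • (precompAntiDual (↑(VE.V k⁻¹) : E →L[ℂ] E) w) ∂μ},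
      IsCompactOperator ⇑(L.comp A) := by
    intro A hAmem
    have hlip : LipschitzWith ‖L‖₊ (fun B : AntiDual E →L[ℂ] AntiDual E => L.comp B) := by
      refine LipschitzWith.of_dist_le_mul fun B B' => ?_
      rw [dist_eq_norm (L.comp B) (L.comp B'), dist_eq_norm B B']
      have hsub : L.comp B - L.comp B' = L.comp (B - B') := by
        ext v
        simp [map_sub]
      rw [hsub]
      calc ‖L.comp (B - B')‖ ≤ ‖L‖ * ‖B - B'‖ := ContinuousLinearMap.opNorm_comp_le _ _
      _ = ↑‖L‖₊ * ‖B - B'‖ := by rw [coe_nnnorm]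
    have hcontLA : Continuous fun B : AntiDual E →L[ℂ] AntiDual E => L.comp B :=
      hlip.continuous
    have hclosed : IsClosed {B : AntiDual E →L[ℂ] AntiDual E |
        IsCompactOperator ⇑(L.comp B)} :=
      isClosed_setOf_isCompactOperator.preimage hcontLA
    exact closure_minimal hLA0 hclosed hAmem
  -- Algebraic properties of `Φ`
  have hΦsub : ∀ c c', Φ c - Φ c' = Φ (c - c') := by
    intro c c'
    ext v
    simp [hΦ, map_sub]
  have hΦlip : LipschitzWith (‖L‖₊ * ‖R‖₊) Φ := by
    refine LipschitzWith.of_dist_le_mul fun c c' => ?_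
    rw [dist_eq_norm (Φ c) (Φ c'), dist_eq_norm c c', hΦsub]
    have hbody : Φ (c - c') = L.comp ((c - c').comp R) := rfl
    rw [hbody]
    calc ‖L.comp ((c - c').comp R)‖ ≤ ‖L‖ * ‖(c - c').comp R‖ :=
          ContinuousLinearMap.opNorm_comp_le _ _
    _ ≤ ‖L‖ * (‖c - c'‖ * ‖R‖) := by
        gcongr
        exact ContinuousLinearMap.opNorm_comp_le _ _
    _ = ↑(‖L‖₊ * ‖R‖₊) * ‖c - c'‖ := by
        rw [NNReal.coe_mul, coe_nnnorm, coe_nnnorm]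
        ring
  have hΦcont : Continuous Φ := hΦlip.continuous
  -- `Φ` maps `B₀ˡ` into compact operators
  have hsubspan : (↑(Submodule.span ℂ {S : E →L[ℂ] AntiDual E |
      ∃ A ∈ closure {A : AntiDual E →L[ℂ] AntiDual E | ∃ ψ : PontryaginDual X → ℂ,
        Integrable ψ μ ∧ HasCompactSupport ψ ∧ ∀ w : AntiDual E, A w =
          ∫ k, ψ k • (precompAntiDual (↑(VE.V k⁻¹) : E →L[ℂ] E) w) ∂μ},
      ∃ T : E →L[ℂ] AntiDual E, S = A.comp T}) : Set (E →L[ℂ] AntiDual E))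
      ⊆ {c : E →L[ℂ] AntiDual E | IsCompactOperator ⇑(Φ c)} := by
    intro x hx
    refine Submodule.span_induction ?_ ?_ ?_ ?_ hx
    · rintro y ⟨A, hAmem, T, rfl⟩
      have hfun : ⇑(Φ (A.comp T)) = ⇑(L.comp A) ∘ ⇑(T.comp R) := by
        funext v
        simp [hΦ]
      show IsCompactOperator ⇑(Φ (A.comp T))
      rw [hfun]
      exact (hLA A hAmem).comp_clm (T.comp R)
    · show IsCompactOperator ⇑(Φ 0)
      have h0 : Φ 0 = 0 := by
        ext v
        simp [hΦ]
      rw [h0]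
      exact isCompactOperator_zero
    · intro x y _ _ hx' hy'
      show IsCompactOperator ⇑(Φ (x + y))
      have hadd : ⇑(Φ (x + y)) = ⇑(Φ x) + ⇑(Φ y) := by
        funext v
        simp [hΦ]
      rw [hadd]
      exact hx'.add hy'
    · intro r x _ hx'
      show IsCompactOperator ⇑(Φ (r • x))
      have hsmul : ⇑(Φ (r • x)) = r • ⇑(Φ x) := by
        funext v
        simp [hΦ]
      rw [hsmul]
      exact hx'.smul r
  have hfinal : ∀ c ∈ B0l (H := E)
      (closure {A : AntiDual E →L[ℂ] AntiDual E | ∃ ψ : PontryaginDual X → ℂ,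
        Integrable ψ μ ∧ HasCompactSupport ψ ∧ ∀ w : AntiDual E, A w =
          ∫ k, ψ k • (precompAntiDual (↑(VE.V k⁻¹) : E →L[ℂ] E) w) ∂μ}),
      IsCompactOperator ⇑(Φ c) := by
    intro c hcmem
    have hclosed : IsClosed {c : E →L[ℂ] AntiDual E | IsCompactOperator ⇑(Φ c)} :=
      isClosed_setOf_isCompactOperator.preimage hΦcont
    exact closure_minimal hsubspan hclosed hcmem
  have hres := hfinal (a - b) hab
  rw [← hkeyid] at hres
  have hflip : ⇑(Ra - Rb) = -⇑(Rb - Ra) := by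
    funext v
    simp only [ContinuousLinearMap.sub_apply, Pi.neg_apply, neg_sub]
  rw [hflip]
  exact hres.neg

end
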